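/- Subdividing an edge of a graph does not change its tree cover number, and deleting a leaf of a graph does not change its tree cover number. -/

import Mathlib

open SimpleGraph

/-- A tree cover of `G`: vertex-disjoint induced subtrees covering all vertices. -/
def IsTreeCover {V : Type} (G : SimpleGraph V) (C : Finset (Set V)) : Prop :=
  (∀ s ∈ C, (G.induce s).IsTree) ∧ (∀ v : V, ∃ s ∈ C, v ∈ s) ∧
    (C : Set (Set V)).PairwiseDisjoint id

/-- The tree cover number: minimum cardinality of a tree cover. -/
noncomputable def treeCoverNumber {V : Type} (G : SimpleGraph V) : ℕ :=
  sInf {n | ∃ C : Finset (Set V), IsTreeCover G C ∧ C.card = n}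

/-- Subdivide the edge `{u, w}` of `G`: `none` is the new vertex, adjacent to exactly `u`
and `w`; the edge `{u, w}` itself is removed. -/
def subdivide {V : Type} (G : SimpleGraph V) (u w : V) : SimpleGraph (Option V) where
  Adj a b :=
    match a, b with
    | some x, some y => (G.deleteEdges {s(u, w)}).Adj x y
    | some x, none => x = u ∨ x = w
    | none, some y => y = u ∨ y = w
    | none, none => False
  symm := by
    constructor
    rintro (_ | x) (_ | y) h
    · exact h
    · exact h
    · exact h
    · exact h.symm
  loopless := by
    constructor
    rintro (_ | x) h
    · exact h
    · exact (G.deleteEdges {s(u, w)}).loopless.irrefl x h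

namespace TCN

section Helpers1
variable {V : Type*} {W : Type*}


/-- Transfer a walk into an induced subgraph when its support lies in the set. -/
def walkToInduce {G : SimpleGraph V} {s : Set V} :
    ∀ {a b : V} (p : G.Walk a b) (hp : ∀ x ∈ p.support, x ∈ s),
      (G.induce s).Walk ⟨a, hp a p.start_mem_support⟩ ⟨b, hp b p.end_mem_support⟩
  | _, _, Walk.nil, _ => Walk.nil
  | _, _, Walk.cons h p, hp =>
      Walk.cons (by exact h) (walkToInduce p (fun x hx => hp x (by simp [hx])))

lemma walkToInduce_map {G : SimpleGraph V} {s : Set V} :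
    ∀ {a b : V} (p : G.Walk a b) (hp : ∀ x ∈ p.support, x ∈ s),
      (walkToInduce p hp).map (Embedding.induce s).toHom = p
  | _, _, Walk.nil, _ => rfl
  | _, _, Walk.cons h p, hp => by
      exact congrArg (Walk.cons h) (walkToInduce_map p _)

lemma isCycle_walkToInduce {G : SimpleGraph V} {s : Set V} {a : V} (p : G.Walk a a)
    (hp : ∀ x ∈ p.support, x ∈ s) (hc : p.IsCycle) : (walkToInduce p hp).IsCycle := by
  rw [← Walk.map_isCycle_iff_of_injective (f := (Embedding.induce s).toHom)
    Subtype.val_injective, walkToInduce_map]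
  exact hc

lemma isPath_walkToInduce {G : SimpleGraph V} {s : Set V} {a b : V} (p : G.Walk a b)
    (hp : ∀ x ∈ p.support, x ∈ s) (hc : p.IsPath) : (walkToInduce p hp).IsPath := by
  rw [← Walk.map_isPath_iff_of_injective (f := (Embedding.induce s).toHom)
    Subtype.val_injective, walkToInduce_map]
  exact hc

/-- Acyclicity pulls back along embeddings. -/
lemma isAcyclic_of_embedding {G : SimpleGraph V} {H : SimpleGraph W} (f : H ↪g G)
    (hG : G.IsAcyclic) : H.IsAcyclic := fun _ c hc =>
  hG (c.map f.toHom) ((Walk.map_isCycle_iff_of_injective f.injective).2 hc)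

lemma IsTree.of_iso {G : SimpleGraph V} {H : SimpleGraph W} (e : G ≃g H) (h : G.IsTree) :
    H.IsTree := by
  refine ⟨e.connected_iff.1 h.isConnected, isAcyclic_of_embedding e.symm.toEmbedding h.2⟩

lemma isTree_iff_of_iso {G : SimpleGraph V} {H : SimpleGraph W} (e : G ≃g H) :
    G.IsTree ↔ H.IsTree := ⟨IsTree.of_iso e, IsTree.of_iso e.symm⟩

lemma reachable_of_walk_pointwise {G : SimpleGraph V} {H : SimpleGraph W} (f : V → W)
    (h : ∀ a b : V, G.Adj a b → H.Reachable (f a) (f b)) :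
    ∀ {a b : V}, G.Walk a b → H.Reachable (f a) (f b) := by
  intro a b p
  induction p with
  | nil => exact Reachable.refl _
  | cons ha p ih => exact (h _ _ ha).trans ih

/-- The double-induce isomorphism. -/
noncomputable def doubleInduceIso (G : SimpleGraph V) (s : Set V) (A : Set s) :
    (G.induce s).induce A ≃g G.induce (Subtype.val '' A) where
  toEquiv := (Equiv.Set.image _ A Subtype.val_injective).trans (Equiv.setCongr rfl)
  map_rel_iff' := by
    rintro ⟨⟨a, ha⟩, hA⟩ ⟨⟨b, hb⟩, hB⟩
    simp [Equiv.Set.image, Equiv.Set.imageOfInjOn]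

/-- A middle vertex of a cycle has two distinct neighbors. -/
lemma IsCycle.exists_distinct_adj {G : SimpleGraph V} {z v : V} (c : G.Walk z z)
    (hc : c.IsCycle) (hv : v ∈ c.support) :
    ∃ a b : V, a ≠ b ∧ G.Adj v a ∧ G.Adj v b := by
  classical
  have hc' := hc.rotate hv
  set c' := c.rotate v hv with hcd
  cases hd : c' with
  | nil => rw [hd] at hc'; exact absurd rfl hc'.ne_nil
  | cons h p =>
    rename_i x
    rw [hd] at hc'
    have hp : p.IsPath ∧ s(v, x) ∉ p.edges := (Walk.cons_isCycle_iff p h).1 hc'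
    -- last edge of p
    cases he : p.reverse with
    | nil =>
      exfalso
      have := congrArg Walk.length he
      simp [Walk.length_reverse] at this
      have h3 := hc'.three_le_length
      simp [Walk.nil_iff_length_eq.mp this] at h3
    | cons h2 r =>
      rename_i y
      refine ⟨x, y, ?_, h, h2⟩
      rintro rfl
      -- then r : Walk x x is a nonnil... get contradiction with length
      have hrev : p.reverse.IsPath := hp.1.reverse
      rw [he] at hrev
      have hr : r.IsPath := hrev.of_cons
      have : r = Walk.nil := Walk.isPath_iff_eq_nil.1 hr
      subst this
      have hlen := congrArg Walk.length he
      simp [Walk.length_reverse] at hlen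
      have h3 := hc'.three_le_length
      simp [hlen] at h3



lemma IsPath.exists_distinct_adj {G : SimpleGraph V} {a b v : V} (p : G.Walk a b)
    (hp : p.IsPath) (hv : v ∈ p.support) (hva : v ≠ a) (hvb : v ≠ b) :
    ∃ y z : V, y ≠ z ∧ G.Adj v y ∧ G.Adj v z := by
  classical
  have hspec := p.take_spec hv
  have hp1 : (p.takeUntil v hv).IsPath := hp.takeUntil hv
  have hp2 : (p.dropUntil v hv).IsPath := hp.dropUntil hv
  cases he2 : p.dropUntil v hv with
  | nil => exact absurd rfl hvb
  | cons h2 r =>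
    rename_i z
    cases he1 : (p.takeUntil v hv).reverse with
    | nil => exact absurd rfl hva
    | cons h1 r1 =>
      rename_i y
      refine ⟨y, z, ?_, h1, h2⟩
      intro hyz
      subst hyz
      -- y ∈ (takeUntil).support, y ∈ (dropUntil).support.tail
      have hy1 : y ∈ (p.takeUntil v hv).support := by
        have : y ∈ (p.takeUntil v hv).reverse.support := by
          rw [he1]
          simp only [Walk.support_cons, List.mem_cons]
          exact Or.inr r1.start_mem_support
        rwa [Walk.support_reverse, List.mem_reverse] at this
      have hy2 : y ∈ (p.dropUntil v hv).support.tail := by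
        rw [he2]
        simpa using r.start_mem_support
      have hnd : (p.support).Nodup := hp.support_nodup
      rw [← hspec, Walk.support_append] at hnd
      exact (List.disjoint_of_nodup_append hnd) hy1 hy2


end Helpers1

section Helpers2
variable {V : Type*}
lemma isTree_induce_insert_pendant {G : SimpleGraph V} {s : Set V} {v x : V}
    (hv : v ∉ s) (hx : x ∈ s) (hadj : G.Adj v x) (huniq : ∀ y ∈ s, G.Adj v y → y = x) :
    (G.induce s).IsTree ↔ (G.induce (insert v s)).IsTree := by
  classical
  have hxi : x ∈ insert v s := Set.mem_insert_of_mem _ hx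
  constructor
  · intro h
    constructor
    · -- connected
      have hub : ∀ z : ↥(insert v s), (G.induce (insert v s)).Reachable z ⟨x, hxi⟩ := by
        rintro ⟨z, hz⟩
        rcases hz with rfl | hz
        · exact Adj.reachable (by simpa using hadj)
        · have := h.isConnected.preconnected ⟨z, hz⟩ ⟨x, hx⟩
          have := this.map (G.induceHomOfLE (Set.subset_insert v s)).toHom
          exact this
      haveI : Nonempty ↥(insert v s) := ⟨⟨x, hxi⟩⟩
      exact Connected.mk (fun a b => (hub a).trans (hub b).symm)
    · -- acyclic
      rintro ⟨z, hz⟩ c hc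
      by_cases hvc : (⟨v, Set.mem_insert v s⟩ : ↥(insert v s)) ∈ c.support
      · obtain ⟨a, b, hab, ha, hb⟩ := IsCycle.exists_distinct_adj c hc hvc
        have ha' : G.Adj v ↑a := by simpa using ha
        have hb' : G.Adj v ↑b := by simpa using hb
        have has : (a : V) ∈ s := a.2.resolve_left (fun h' => ha'.ne' h')
        have hbs : (b : V) ∈ s := b.2.resolve_left (fun h' => hb'.ne' h')
        exact hab (Subtype.ext ((huniq _ has ha').trans (huniq _ hbs hb').symm))
      · set C := c.map (Embedding.induce (insert v s)).toHom with hC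
        have hCc : C.IsCycle :=
          (Walk.map_isCycle_iff_of_injective Subtype.val_injective).2 hc
        have hsup : ∀ y ∈ C.support, y ∈ s := by
          intro y hy
          rw [hC, Walk.support_map, List.mem_map] at hy
          obtain ⟨⟨y', hy'⟩, hy'c, rfl⟩ := hy
          rcases hy' with rfl | hys
          · exact absurd hy'c hvc
          · exact hys
        exact h.2 _ (isCycle_walkToInduce C hsup hCc)
  · intro h
    constructor
    · haveI : Nonempty ↥s := ⟨⟨x, hx⟩⟩
      refine Connected.mk (fun a b => ?_)
      obtain ⟨p⟩ := h.isConnected.preconnected ⟨↑a, Set.mem_insert_of_mem _ a.2⟩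
        ⟨↑b, Set.mem_insert_of_mem _ b.2⟩
      have hq : p.toPath.val.IsPath := p.toPath.2
      by_cases hvc : (⟨v, Set.mem_insert v s⟩ : ↥(insert v s)) ∈ p.toPath.val.support
      · exfalso
        have hva : (⟨v, Set.mem_insert v s⟩ : ↥(insert v s)) ≠
            ⟨↑a, Set.mem_insert_of_mem _ a.2⟩ := by
          intro h'
          exact hv (by rw [show v = (a : V) from congrArg Subtype.val h'] ; exact a.2)
        have hvb : (⟨v, Set.mem_insert v s⟩ : ↥(insert v s)) ≠
            ⟨↑b, Set.mem_insert_of_mem _ b.2⟩ := by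
          intro h'
          exact hv (by rw [show v = (b : V) from congrArg Subtype.val h'] ; exact b.2)
        obtain ⟨y, z, hyz, hy, hz⟩ := IsPath.exists_distinct_adj _ hq hvc hva hvb
        have hy' : G.Adj v ↑y := by simpa using hy
        have hz' : G.Adj v ↑z := by simpa using hz
        have hys : (y : V) ∈ s := y.2.resolve_left (fun h' => hy'.ne' h')
        have hzs : (z : V) ∈ s := z.2.resolve_left (fun h' => hz'.ne' h')
        exact hyz (Subtype.ext ((huniq _ hys hy').trans (huniq _ hzs hz').symm))
      · set C := p.toPath.val.map (Embedding.induce (insert v s)).toHom with hC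
        have hsup : ∀ y ∈ C.support, y ∈ s := by
          intro y hy
          rw [hC, Walk.support_map, List.mem_map] at hy
          obtain ⟨⟨y', hy'⟩, hy'c, rfl⟩ := hy
          rcases hy' with rfl | hys
          · exact absurd hy'c hvc
          · exact hys
        have := walkToInduce C hsup
        exact ⟨this.copy (Subtype.ext rfl) (Subtype.ext rfl)⟩
    · exact isAcyclic_of_embedding (G.induceHomOfLE (Set.subset_insert v s)) h.2


end Helpers2

section Helpers3
variable {V : Type} {W : Type*}
lemma exists_walk_pullback {H : SimpleGraph W} {G : SimpleGraph V} (f : H ↪g G) :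
    ∀ {x y : V} (p : G.Walk x y) (_ : ∀ z ∈ p.support, z ∈ Set.range f)
      {a b : W} (ha : f a = x) (hb : f b = y),
      ∃ q : H.Walk a b, q.map f.toHom = p.copy ha.symm hb.symm := by
  intro x y p
  induction p with
  | nil =>
    intro hp a b ha hb
    have hab : a = b := f.injective (ha.trans hb.symm)
    subst hab
    subst ha
    exact ⟨Walk.nil, by simp⟩
  | cons h p ih =>
    rename_i x' m y'
    intro hp a b ha hb
    subst ha
    subst hb
    obtain ⟨c, hc⟩ := hp m (by simp)
    obtain ⟨q, hq⟩ := ih (fun z hz => hp z (by simp [hz])) hc rfl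
    refine ⟨Walk.cons (f.map_rel_iff.1 (by rw [hc]; exact h)) q, ?_⟩
    simp only [Walk.map_cons, hq]
    subst hc
    simp

lemma exists_decomp_of_mem_cycle {G : SimpleGraph V} {z v : V} (c : G.Walk z z)
    (hc : c.IsCycle) (hv : v ∈ c.support) :
    ∃ (a b : V) (r : G.Walk a b), G.Adj v a ∧ G.Adj v b ∧ a ≠ b ∧ r.IsPath ∧ v ∉ r.support := by
  classical
  have hc' := hc.rotate hv
  cases hd : c.rotate v hv with
  | nil => rw [hd] at hc'; exact absurd rfl hc'.ne_nil
  | cons h p =>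
    rename_i x
    rw [hd] at hc'
    have hp : p.IsPath ∧ s(v, x) ∉ p.edges := (Walk.cons_isCycle_iff p h).1 hc'
    cases he : p.reverse with
    | nil =>
      exfalso
      have hlen := congrArg Walk.length he
      simp only [Walk.length_reverse, Walk.length_nil] at hlen
      have h3 := hc'.three_le_length
      simp [hlen] at h3
    | cons h2 r =>
      rename_i y
      have hrev : p.reverse.IsPath := hp.1.reverse
      rw [he] at hrev
      have hr : r.IsPath := hrev.of_cons
      have hvr : v ∉ r.support := by
        have := hrev.2
        simp only [Walk.support_cons, List.nodup_cons] at this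
        exact this.1
      refine ⟨y, x, r, h2, h, ?_, hr, hvr⟩
      rintro rfl
      have : r = Walk.nil := Walk.isPath_iff_eq_nil.1 hr
      subst this
      have hlen := congrArg Walk.length he
      simp only [Walk.length_reverse, Walk.length_cons, Walk.length_nil] at hlen
      have h3 := hc'.three_le_length
      simp [hlen] at h3

section Subdivide

variable {G : SimpleGraph V} {u w : V}

lemma adj_subdivide_none {o : Option V} :
    (subdivide G u w).Adj none o ↔ o = some u ∨ o = some w := by
  cases o <;> simp [subdivide]

lemma deleteEdges_induce_le (s : Set V) :
    (G.deleteEdges {s(u, w)}).induce s ≤ G.induce s := by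
  intro a b h
  exact ((deleteEdges_adj).1 h).1

lemma mss_injective {G' H : SimpleGraph V} (hle : G' ≤ H) :
    Function.Injective (Hom.ofLE hle) := fun a b h => by simpa using h

lemma edges_map_mss {G' H : SimpleGraph V} (hle : G' ≤ H) {a b : V} (p : G'.Walk a b) :
    (p.map (Hom.ofLE hle)).edges = p.edges := by
  have hp : ∀ e ∈ p.edges, e ∈ H.edgeSet := fun e he => edgeSet_mono hle (p.edges_subset_edgeSet he)
  rw [← p.transfer_eq_map_ofLE hp hle, Walk.edges_transfer]

lemma edge_ne_adj {s : Set V} (hu : u ∈ s) (hw : w ∈ s) {x y : ↥s}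
    (hxy : (G.induce s).Adj x y) (hne : s(x, y) ≠ s((⟨u, hu⟩ : ↥s), ⟨w, hw⟩)) :
    ((G.deleteEdges {s(u, w)}).induce s).Adj x y := by
  refine (deleteEdges_adj).2 ⟨hxy, ?_⟩
  simp only [Set.mem_singleton_iff, Sym2.eq_iff]
  intro hcon
  apply hne
  rw [Sym2.eq_iff]
  rcases hcon with ⟨h1, h2⟩ | ⟨h1, h2⟩
  · exact Or.inl ⟨Subtype.ext h1, Subtype.ext h2⟩
  · exact Or.inr ⟨Subtype.ext h1, Subtype.ext h2⟩

/-- The embedding of the edge-deleted induced graph in the subdivision. -/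
def E1 (G : SimpleGraph V) (u w : V) (s : Set V) :
    (G.deleteEdges {s(u, w)}).induce s ↪g
      (subdivide G u w).induce (insert none (some '' s)) where
  toFun := fun a => ⟨some ↑a, Set.mem_insert_of_mem _ ⟨↑a, a.2, rfl⟩⟩
  inj' := by
    rintro ⟨a, ha⟩ ⟨b, hb⟩ h
    simpa [Subtype.ext_iff] using h
  map_rel_iff' := Iff.rfl

lemma subdivide_induce_isTree_iff (hadj : G.Adj u w) {s : Set V} (hu : u ∈ s) (hw : w ∈ s) :
    (G.induce s).IsTree ↔
      ((subdivide G u w).induce (insert none (some '' s))).IsTree := by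
  classical
  set K := G.deleteEdges {s(u, w)} with hK
  set t : Set (Option V) := insert none (some '' s) with ht
  set D := subdivide G u w with hD
  have hKle : K.induce s ≤ G.induce s := deleteEdges_induce_le s
  have huw : u ≠ w := hadj.ne
  have hvnone : (none : Option V) ∈ t := Set.mem_insert _ _
  have hvu : (some u : Option V) ∈ t := Set.mem_insert_of_mem _ ⟨u, hu, rfl⟩
  have hvw : (some w : Option V) ∈ t := Set.mem_insert_of_mem _ ⟨w, hw, rfl⟩
  set vnone : ↥t := ⟨none, hvnone⟩ with hvnone'
  have hrange : ∀ z : ↥t, z ≠ vnone → z ∈ Set.range (E1 G u w s) := by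
    rintro ⟨z, hz⟩ hzz
    rcases hz with rfl | ⟨a, ha, rfl⟩
    · exact absurd rfl hzz
    · exact ⟨⟨a, ha⟩, rfl⟩
  have hKuw : ∀ a b : ↥s, (K.induce s).Adj a b → ¬((a : V) = u ∧ (b : V) = w) ∧
      ¬((a : V) = w ∧ (b : V) = u) := by
    intro a b hab
    have := ((deleteEdges_adj).1 hab).2
    simp only [Set.mem_singleton_iff, Sym2.eq_iff] at this
    tauto
  constructor
  · intro h
    constructor
    · -- connected
      haveI : Nonempty ↥t := ⟨vnone⟩
      have key : ∀ a b : ↥s, (G.induce s).Adj a b →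
          (D.induce t).Reachable (E1 G u w s a) (E1 G u w s b) := by
        intro a b hab
        by_cases hcase : s(a, b) = s((⟨u, hu⟩ : ↥s), ⟨w, hw⟩)
        · -- go через none
          rw [Sym2.eq_iff] at hcase
          have h1 : (D.induce t).Adj (E1 G u w s a) vnone := by
            rcases hcase with ⟨ha, hb⟩ | ⟨ha, hb⟩
            · have : (a : V) = u := congrArg Subtype.val ha
              show D.Adj (some ↑a) none
              rw [this]; exact Or.inl rfl
            · have : (a : V) = w := congrArg Subtype.val ha
              show D.Adj (some ↑a) none
              rw [this]; exact Or.inr rfl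
          have h2 : (D.induce t).Adj vnone (E1 G u w s b) := by
            rcases hcase with ⟨ha, hb⟩ | ⟨ha, hb⟩
            · have : (b : V) = w := congrArg Subtype.val hb
              show D.Adj none (some ↑b)
              rw [this]; exact Or.inr rfl
            · have : (b : V) = u := congrArg Subtype.val hb
              show D.Adj none (some ↑b)
              rw [this]; exact Or.inl rfl
          exact (h1.reachable).trans h2.reachable
        · exact ((E1 G u w s).map_rel_iff.2 (edge_ne_adj hu hw hab hcase)).reachable
      have hub : ∀ z : ↥t, (D.induce t).Reachable z (E1 G u w s ⟨u, hu⟩) := by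
        rintro ⟨z, hz⟩
        rcases hz with rfl | ⟨a, ha, rfl⟩
        · refine Adj.reachable ?_
          show D.Adj none (some u)
          exact Or.inl rfl
        · obtain ⟨p⟩ := h.isConnected.preconnected ⟨a, ha⟩ ⟨u, hu⟩
          exact reachable_of_walk_pointwise (E1 G u w s) key p
      exact Connected.mk (fun a b => (hub a).trans (hub b).symm)
    · -- acyclic
      rintro z c hc
      by_cases hn : vnone ∈ c.support
      · obtain ⟨a1, b1, r, ha1, hb1, hab, hr, hvr⟩ := exists_decomp_of_mem_cycle c hc hn
        have ha1' : (a1 : Option V) = some u ∨ (a1 : Option V) = some w := by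
          have : D.Adj none ↑a1 := ha1
          rwa [adj_subdivide_none] at this
        have hb1' : (b1 : Option V) = some u ∨ (b1 : Option V) = some w := by
          have : D.Adj none ↑b1 := hb1
          rwa [adj_subdivide_none] at this
        have hsupr : ∀ z' ∈ r.support, z' ∈ Set.range (E1 G u w s) := by
          intro z' hz'
          exact hrange z' (fun hzz => hvr (hzz ▸ hz'))
        have key2 : ∀ (x y : ↥s), (G.induce s).Adj x y →
            ¬ ((G.deleteEdges {s(u, w)}).induce s).Adj y x →
            (a1 : Option V) = some ↑x → (b1 : Option V) = some ↑y → False := by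
          intro x y hxy hno hxa hyb
          obtain ⟨q, hq⟩ := exists_walk_pullback (E1 G u w s) r hsupr
            (a := x) (b := y) (Subtype.ext hxa.symm) (Subtype.ext hyb.symm)
          have hqpath : q.IsPath := by
            have h1 : (q.map (E1 G u w s).toHom).IsPath := by rw [hq]; simpa using hr
            exact h1.of_map
          have hPpath : (q.map (Hom.ofLE hKle)).IsPath :=
            Walk.map_isPath_of_injective (mss_injective hKle) hqpath
          have hedge : s(y, x) ∉ (q.map (Hom.ofLE hKle)).edges := by
            rw [edges_map_mss]
            intro hmem
            exact hno (q.adj_of_mem_edges hmem)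
          have hcyc : (Walk.cons hxy.symm (q.map (Hom.ofLE hKle))).IsCycle :=
            (Walk.cons_isCycle_iff _ _).2 ⟨hPpath, hedge⟩
          exact h.2 _ hcyc
        have hKnadj : ∀ x y : ↥s, (x : V) = u → (y : V) = w →
            ¬ ((G.deleteEdges {s(u, w)}).induce s).Adj x y := by
          intro x y hx hy hadj'
          have := ((deleteEdges_adj).1 hadj').2
          apply this
          simp [hx, hy]
        rcases ha1' with ha1' | ha1' <;> rcases hb1' with hb1' | hb1'
        · exact hab (Subtype.ext (ha1'.trans hb1'.symm))
        · -- a1 = u, b1 = w : x := ⟨u⟩? key2 x y with a1 = some x: x = ⟨u⟩, y = ⟨w⟩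
          refine key2 ⟨u, hu⟩ ⟨w, hw⟩ (by exact hadj) ?_ ha1' hb1'
          intro hadj'
          have := ((deleteEdges_adj).1 hadj').2
          exact this (by simp [Sym2.eq_swap])
        · refine key2 ⟨w, hw⟩ ⟨u, hu⟩ (by exact hadj.symm) ?_ ha1' hb1'
          intro hadj'
          have := ((deleteEdges_adj).1 hadj').2
          exact this (by simp)
        · exact hab (Subtype.ext (ha1'.trans hb1'.symm))
      · -- cycle avoids none: pull back directly
        obtain ⟨z', hz'⟩ := hrange z (fun hzz => hn (hzz ▸ c.start_mem_support))
        obtain ⟨q, hq⟩ := exists_walk_pullback (E1 G u w s) (c.copy hz'.symm hz'.symm)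
          (by intro z2 hz2
              rw [Walk.support_copy] at hz2
              exact hrange z2 (fun hzz => hn (hzz ▸ hz2))) rfl rfl
        have hqc : q.IsCycle := by
          have hinj : Function.Injective ((E1 G u w s).toHom : ↥s → ↥t) :=
            fun a b hab => (E1 G u w s).injective hab
          have h1 : (q.map (E1 G u w s).toHom).IsCycle := by rw [hq]; simpa using hc
          exact (Walk.map_isCycle_iff_of_injective hinj).1 h1
        have : (q.map (Hom.ofLE hKle)).IsCycle :=
          (Walk.map_isCycle_iff_of_injective (mss_injective hKle)).2 hqc
        exact h.2 _ this
  · intro h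
    have hE1inj : Function.Injective ((E1 G u w s).toHom : ↥s → ↥t) :=
      fun a b hab => (E1 G u w s).injective hab
    constructor
    · -- connected
      haveI : Nonempty ↥s := ⟨⟨u, hu⟩⟩
      have hdownmem : ∀ z : ↥t, z.1.getD u ∈ s := by
        rintro ⟨z, hz⟩
        rcases hz with rfl | ⟨a, ha, rfl⟩
        · exact hu
        · exact ha
      set down : ↥t → ↥s := fun z => ⟨z.1.getD u, hdownmem z⟩ with hdownd
      have pointwise : ∀ z1 z2 : ↥t, (D.induce t).Adj z1 z2 →
          (G.induce s).Reachable (down z1) (down z2) := by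
        rintro ⟨(_ | a), hz1⟩ ⟨(_ | b), hz2⟩ hadj'
        · exact (hadj'.ne rfl).elim
        · have hb : (some b : Option V) = some u ∨ (some b : Option V) = some w := by
            have : D.Adj none (some b) := hadj'
            rwa [adj_subdivide_none] at this
          rcases hb with hb | hb
          · have : b = u := by injection hb
            subst this
            exact Reachable.refl _
          · have : b = w := by injection hb
            subst this
            exact Adj.reachable (by exact hadj)
        · have hb : (some a : Option V) = some u ∨ (some a : Option V) = some w := by
            have : D.Adj none (some a) := hadj'.symm
            rwa [adj_subdivide_none] at this
          rcases hb with hb | hb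
          · have : a = u := by injection hb
            subst this
            exact Reachable.refl _
          · have : a = w := by injection hb
            subst this
            exact (Adj.reachable (by exact hadj)).symm
        · have hKab : (G.deleteEdges {s(u, w)}).Adj a b := hadj'
          exact Adj.reachable (by exact ((deleteEdges_adj).1 hKab).1)
      refine Connected.mk (fun a b => ?_)
      obtain ⟨p⟩ := h.isConnected.preconnected (E1 G u w s a) (E1 G u w s b)
      have := reachable_of_walk_pointwise down pointwise p
      have hda : down (E1 G u w s a) = a := Subtype.ext rfl
      have hdb : down (E1 G u w s b) = b := Subtype.ext rfl
      rwa [hda, hdb] at this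
    · -- acyclic
      have vnone_notmem_mapped : ∀ {x y : ↥s} (p0 : ((G.deleteEdges {s(u, w)}).induce s).Walk x y),
          vnone ∉ (p0.map (E1 G u w s).toHom).support := by
        intro x y p0 hmem
        rw [Walk.support_map, List.mem_map] at hmem
        obtain ⟨z', _, hz'⟩ := hmem
        exact Option.some_ne_none _ (congrArg (fun x : ↥t => (x : Option V)) hz')
      have key : ∀ (p : (G.induce s).Walk ⟨w, hw⟩ ⟨u, hu⟩), p.IsPath →
          s((⟨u, hu⟩ : ↥s), ⟨w, hw⟩) ∉ p.edges → False := by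
        intro p hp hpe
        have hsub2 : ∀ e ∈ p.edges, e ∈ ((G.deleteEdges {s(u, w)}).induce s).edgeSet := by
          intro e hee
          induction e with
          | _ x y =>
            rw [mem_edgeSet]
            refine edge_ne_adj hu hw (p.adj_of_mem_edges hee) (fun h' => hpe ?_)
            rwa [h'] at hee
        set p' := p.transfer _ hsub2 with hp'd
        have hp'path : p'.IsPath := hp.transfer hsub2
        set P := p'.map (E1 G u w s).toHom with hPd
        have hPpath : P.IsPath := Walk.map_isPath_of_injective hE1inj hp'path
        have h2 : (D.induce t).Adj vnone (E1 G u w s ⟨w, hw⟩) := by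
          show D.Adj none (some w)
          exact Or.inr rfl
        have h1 : (D.induce t).Adj (E1 G u w s ⟨u, hu⟩) vnone := by
          show D.Adj (some u) none
          exact Or.inl rfl
        have hinner : (Walk.cons h2 P).IsPath := by
          rw [Walk.cons_isPath_iff]
          exact ⟨hPpath, vnone_notmem_mapped p'⟩
        have hcyc : (Walk.cons h1 (Walk.cons h2 P)).IsCycle := by
          refine (Walk.cons_isCycle_iff _ _).2 ⟨hinner, ?_⟩
          rw [Walk.edges_cons, List.mem_cons]
          rintro (habs | habs)
          · rw [Sym2.eq_iff] at habs
            rcases habs with ⟨habs, -⟩ | ⟨habs, -⟩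
            · exact Option.some_ne_none _ (congrArg (fun x : ↥t => (x : Option V)) habs)
            · exact hadj.ne (by injection (congrArg (fun x : ↥t => (x : Option V)) habs))
          · exact vnone_notmem_mapped p' (Walk.snd_mem_support_of_mem_edges P habs)
        exact h.2 _ hcyc
      rintro z c hc
      by_cases he : s((⟨u, hu⟩ : ↥s), ⟨w, hw⟩) ∈ c.edges
      · -- rotate to u
        classical
        have humem : (⟨u, hu⟩ : ↥s) ∈ c.support := c.fst_mem_support_of_mem_edges he
        have hc' := hc.rotate humem
        have he' : s((⟨u, hu⟩ : ↥s), ⟨w, hw⟩) ∈ (c.rotate _ humem).edges :=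
          ((c.rotate_edges _ humem).mem_iff).2 he
        cases hd : c.rotate _ humem with
        | nil => rw [hd] at hc'; exact absurd rfl hc'.ne_nil
        | cons h1 p =>
          rename_i x1
          rw [hd] at hc' he'
          obtain ⟨ppath, pedge⟩ := (Walk.cons_isCycle_iff p h1).1 hc'
          rw [Walk.edges_cons, List.mem_cons] at he'
          rcases he' with he' | he'
          · -- first edge is uw
            have hx1 : x1 = ⟨w, hw⟩ := by
              rw [Sym2.eq_iff] at he'
              rcases he' with ⟨-, h'⟩ | ⟨h', h''⟩
              · exact h'.symm
              · exact absurd (congrArg Subtype.val h'') (by simpa using hadj.ne')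
            subst hx1
            exact key p ppath (fun hmem => pedge hmem)
          · -- uw is inside p : last edge of p
            cases hrev : p.reverse with
            | nil =>
              exfalso
              have : p.edges = [] := by
                have := congrArg Walk.edges hrev
                rw [Walk.edges_reverse] at this
                simpa using this
              rw [this] at he'
              exact absurd he' List.not_mem_nil
            | cons h2 r =>
              rename_i y1
              have hprev : p.reverse.IsPath := ppath.reverse
              rw [hrev] at hprev
              have hrpath : r.IsPath := hprev.of_cons
              have hur : (⟨u, hu⟩ : ↥s) ∉ r.support := by
                have := hprev.2
                simp only [Walk.support_cons, List.nodup_cons] at this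
                exact this.1
              have he'' : s((⟨u, hu⟩ : ↥s), ⟨w, hw⟩) ∈ (Walk.cons h2 r).edges := by
                rw [← hrev, Walk.edges_reverse, List.mem_reverse]
                exact he'
              rw [Walk.edges_cons, List.mem_cons] at he''
              rcases he'' with he'' | he'' 
              · -- y1 = w
                have hy1 : y1 = ⟨w, hw⟩ := by
                  rw [Sym2.eq_iff] at he''
                  rcases he'' with ⟨-, h'⟩ | ⟨h', h''⟩
                  · exact h'.symm
                  · exact absurd (congrArg Subtype.val h'') (by simpa using hadj.ne')
                subst hy1
                -- q := r.concat (h1.symm) : Walk ⟨w⟩ ⟨u⟩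
                have hx1w : x1 ≠ ⟨w, hw⟩ := by
                  rintro rfl
                  exact pedge he'
                have hq : (r.concat h1.symm).IsPath := by
                  rw [Walk.isPath_def, Walk.support_concat]
                  refine List.Nodup.append hrpath.support_nodup (by simp) ?_
                  intro x hx hx2
                  rw [List.mem_singleton] at hx2
                  subst hx2
                  exact hur hx
                refine key (r.concat h1.symm) hq ?_
                rw [Walk.edges_concat, List.concat_eq_append, List.mem_append]
                rintro (hmem | hmem)
                · exact hur (Walk.fst_mem_support_of_mem_edges r hmem)
                · rw [List.mem_singleton, Sym2.eq_iff] at hmem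
                  rcases hmem with ⟨-, h'⟩ | ⟨-, h'⟩
                  · exact hadj.ne (congrArg Subtype.val h').symm
                  · exact hx1w h'.symm
              · exact hur (Walk.fst_mem_support_of_mem_edges r he'')
      · -- edge uw not used: transfer directly
        have hsub : ∀ e ∈ c.edges, e ∈ ((G.deleteEdges {s(u, w)}).induce s).edgeSet := by
          intro e hee
          induction e with
          | _ x y =>
            rw [mem_edgeSet]
            refine edge_ne_adj hu hw (c.adj_of_mem_edges hee) (fun h' => he ?_)
            rwa [h'] at hee
        have hc2 : (c.transfer _ hsub).IsCycle := hc.transfer hsub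
        have : ((c.transfer _ hsub).map (E1 G u w s).toHom).IsCycle :=
          (Walk.map_isCycle_iff_of_injective hE1inj).2 hc2
        exact h.2 _ this

end Subdivide

end Helpers3

section Helpers4
variable {W : Type*}
/-- Splitting a tree along an edge. -/
lemma tree_split {H : SimpleGraph W} (h : H.IsTree) {a b : W} (hab : H.Adj a b) :
    ∃ A : Set W, A = {z | (H.deleteEdges {s(a, b)}).Reachable a z} ∧ a ∈ A ∧ b ∉ A ∧
      (H.induce A).IsTree ∧ (H.induce Aᶜ).IsTree := by
  classical
  set H' := H.deleteEdges {s(a, b)} with hH'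
  have hbridge : ¬ H'.Reachable a b := by
    have := (isAcyclic_iff_forall_adj_isBridge.1 h.2) hab
    rw [isBridge_iff] at this
    exact this
  have hH'le : H' ≤ H := by
    intro x y hxy
    exact ((deleteEdges_adj).1 hxy).1
  set A : Set W := {z | H'.Reachable a z} with hA
  have haA : a ∈ A := Reachable.refl _
  have hbA : b ∉ A := hbridge
  have hstep : ∀ y z : W, H.Adj y z →
      (H'.Reachable a y ∨ H'.Reachable b y) → (H'.Reachable a z ∨ H'.Reachable b z) := by
    intro y z hyz hy
    by_cases hcase : s(y, z) = s(a, b)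
    · rw [Sym2.eq_iff] at hcase
      rcases hcase with ⟨rfl, rfl⟩ | ⟨rfl, rfl⟩
      · exact Or.inr (Reachable.refl _)
      · exact Or.inl (Reachable.refl _)
    · have : H'.Adj y z := (deleteEdges_adj).2 ⟨hyz, by simpa using hcase⟩
      rcases hy with hy | hy
      · exact Or.inl (hy.trans this.reachable)
      · exact Or.inr (hy.trans this.reachable)
  have claim : ∀ (y z : W) (p : H.Walk y z), (H'.Reachable a y ∨ H'.Reachable b y) →
      (H'.Reachable a z ∨ H'.Reachable b z) := by
    intro y z p
    induction p with
    | nil => exact id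
    | cons h' p ih => exact fun hy => ih (hstep _ _ h' hy)
  have hR : ∀ z : W, H'.Reachable a z ∨ H'.Reachable b z := by
    intro z
    obtain ⟨p⟩ := h.isConnected.preconnected a z
    exact claim a z p (Or.inl (Reachable.refl _))
  have hle2 : H'.induce A ≤ H.induce A := fun x y hxy => hH'le hxy
  have hle3 : H'.induce Aᶜ ≤ H.induce Aᶜ := fun x y hxy => hH'le hxy
  refine ⟨A, hA, haA, hbA, ⟨?_, isAcyclic_of_embedding (Embedding.induce A) h.2⟩,
    ⟨?_, isAcyclic_of_embedding (Embedding.induce Aᶜ) h.2⟩⟩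
  · haveI : Nonempty ↥A := ⟨⟨a, haA⟩⟩
    have hub : ∀ z : ↥A, (H.induce A).Reachable z ⟨a, haA⟩ := by
      rintro ⟨z, hz⟩
      obtain ⟨p⟩ := hz
      have hsup : ∀ x ∈ p.support, x ∈ A := by
        intro x hx
        exact ⟨p.takeUntil x hx⟩
      have q := walkToInduce p hsup
      exact (Reachable.map (Hom.ofLE hle2) ⟨q⟩).symm
    exact Connected.mk (fun x y => (hub x).trans (hub y).symm)
  · haveI : Nonempty ↥(Aᶜ) := ⟨⟨b, hbA⟩⟩
    have hub : ∀ z : ↥(Aᶜ), (H.induce Aᶜ).Reachable z ⟨b, hbA⟩ := by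
      rintro ⟨z, hz⟩
      have hzb : H'.Reachable b z := (hR z).resolve_left hz
      obtain ⟨p⟩ := hzb
      have hsup : ∀ x ∈ p.support, x ∈ Aᶜ := by
        intro x hx hxA
        exact hz (hxA.trans ⟨p.dropUntil x hx⟩)
      have q := walkToInduce p hsup
      exact (Reachable.map (Hom.ofLE hle3) ⟨q⟩).symm
    exact Connected.mk (fun x y => (hub x).trans (hub y).symm)


end Helpers4

section CoverInfra
variable {V : Type}
lemma isTree_induce_singleton (G : SimpleGraph V) (v : V) : (G.induce {v}).IsTree := by
  haveI : Nonempty ↥({v} : Set V) := ⟨⟨v, rfl⟩⟩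
  have hsub : ∀ a b : ↥({v} : Set V), a = b := by
    rintro ⟨a, ha⟩ ⟨b, hb⟩
    rw [Set.mem_singleton_iff] at ha hb
    subst ha; subst hb; rfl
  constructor
  · exact Connected.mk (fun a b => by rw [hsub a b])
  · intro z c hc
    cases c with
    | nil => exact hc.ne_nil rfl
    | cons h p =>
      rename_i y
      have := hsub z y
      subst this
      exact (G.induce {v}).loopless.irrefl _ h

lemma exists_treeCover (G : SimpleGraph V) [Fintype V] : ∃ C, IsTreeCover G C := by
  classical
  refine ⟨Finset.univ.image (fun v => ({v} : Set V)), ?_, ?_, ?_⟩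
  · intro s hs
    rw [Finset.mem_image] at hs
    obtain ⟨v, -, rfl⟩ := hs
    exact isTree_induce_singleton G v
  · intro v
    exact ⟨{v}, Finset.mem_image.2 ⟨v, Finset.mem_univ v, rfl⟩, rfl⟩
  · intro s hs t ht hst
    rw [Finset.mem_coe, Finset.mem_image] at hs ht
    obtain ⟨a, -, rfl⟩ := hs
    obtain ⟨b, -, rfl⟩ := ht
    have hab : a ≠ b := fun h => hst (by rw [h])
    exact Set.disjoint_singleton.2 hab

lemma tcn_le {V' : Type} [Fintype V] (G : SimpleGraph V) (H : SimpleGraph V')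
    (h : ∀ C, IsTreeCover G C → ∃ C', IsTreeCover H C' ∧ C'.card ≤ C.card) :
    treeCoverNumber H ≤ treeCoverNumber G := by
  obtain ⟨C0, hC0⟩ := exists_treeCover G
  have hne : {n | ∃ C : Finset (Set V), IsTreeCover G C ∧ C.card = n}.Nonempty :=
    ⟨C0.card, C0, hC0, rfl⟩
  obtain ⟨C, hC, hcard⟩ := Nat.sInf_mem hne
  obtain ⟨C', hC', hle⟩ := h C hC
  calc treeCoverNumber H ≤ C'.card := Nat.sInf_le ⟨C', hC', rfl⟩
    _ ≤ C.card := hle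
    _ = treeCoverNumber G := hcard

lemma cover_nonempty {G : SimpleGraph V} {C : Finset (Set V)} (hC : IsTreeCover G C)
    {s : Set V} (hs : s ∈ C) : s.Nonempty := by
  obtain ⟨x⟩ := (hC.1 s hs).isConnected.nonempty
  exact ⟨↑x, x.2⟩


end CoverInfra

section SubdivideIso
variable {V : Type}
section S
variable {G : SimpleGraph V} {u w : V}

lemma induce_deleteEdges_eq {X : Set V} (hnot : ¬(u ∈ X ∧ w ∈ X)) :
    (G.deleteEdges {s(u, w)}).induce X = G.induce X := by
  ext a b
  simp only [comap_adj, Function.Embedding.coe_subtype, deleteEdges_adj,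
    Set.mem_singleton_iff, and_iff_left_iff_imp]
  intro hab hcon
  rw [Sym2.eq_iff] at hcon
  rcases hcon with ⟨h1, h2⟩ | ⟨h1, h2⟩
  · exact hnot ⟨h1 ▸ a.2, h2 ▸ b.2⟩
  · exact hnot ⟨h2 ▸ b.2, h1 ▸ a.2⟩

/-- iso between the deleted graph induced and the subdivision induced on `some '' s`. -/
noncomputable def E0 (G : SimpleGraph V) (u w : V) (s : Set V) :
    (G.deleteEdges {s(u, w)}).induce s ≃g (subdivide G u w).induce (some '' s) where
  toEquiv := Equiv.Set.image some s (Option.some_injective V)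
  map_rel_iff' := by
    rintro ⟨a, ha⟩ ⟨b, hb⟩
    simp only [Equiv.Set.image, Equiv.Set.imageOfInjOn, Equiv.coe_fn_mk, comap_adj,
      Function.Embedding.coe_subtype]
    rfl

/-- The split lemma applied to get induced subtrees of `G` itself. -/
lemma split_app {X : Set V} (hu : u ∈ X) (hw : w ∈ X) (hadj : G.Adj u w)
    (hT : ((G.deleteEdges {s(u, w)}).induce X).IsTree) :
    ∃ A B : Set V, A ∪ B = X ∧ Disjoint A B ∧ u ∈ A ∧ w ∈ B ∧
      (G.induce A).IsTree ∧ (G.induce B).IsTree := by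
  classical
  set K := G.deleteEdges {s(u, w)} with hK
  set H := K.induce X with hH
  -- find the first edge on a path from u to w
  have hne : (⟨u, hu⟩ : ↥X) ≠ ⟨w, hw⟩ := fun h => hadj.ne (congrArg Subtype.val h)
  obtain ⟨p0⟩ := hT.isConnected.preconnected ⟨u, hu⟩ ⟨w, hw⟩
  set p := p0.toPath.val with hp
  have hppath : p.IsPath := p0.toPath.2
  cases hd : p with
  | nil => exact absurd (Subtype.ext rfl) hne
  | cons h1 q =>
    rename_i c
    obtain ⟨A0, hA0eq, huA, hcA, hA1, hA2⟩ := tree_split hT h1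
    have hbridge : ¬ (H.deleteEdges {s((⟨u, hu⟩ : ↥X), c)}).Reachable ⟨u, hu⟩ c := by
      have := (isAcyclic_iff_forall_adj_isBridge.1 hT.2) h1
      rw [isBridge_iff] at this
      exact this
    have hwA : (⟨w, hw⟩ : ↥X) ∉ A0 := by
      intro hwA0
      rw [hA0eq] at hwA0
      -- q avoids the first edge
      have hnodup : ((Walk.cons h1 q).edges).Nodup := by
        rw [← hd]
        exact hppath.isTrail.edges_nodup
      rw [Walk.edges_cons, List.nodup_cons] at hnodup
      have hsubq : ∀ e ∈ q.edges, e ∈ (H.deleteEdges {s((⟨u, hu⟩ : ↥X), c)}).edgeSet := by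
        intro e hee
        induction e with
        | _ x y =>
          rw [mem_edgeSet]
          refine (deleteEdges_adj).2 ⟨q.adj_of_mem_edges hee, ?_⟩
          simp only [Set.mem_singleton_iff]
          intro hbad
          exact hnodup.1 (hbad ▸ hee)
      have hq' : (H.deleteEdges {s((⟨u, hu⟩ : ↥X), c)}).Reachable c ⟨w, hw⟩ :=
        ⟨q.transfer _ hsubq⟩
      exact hbridge (hwA0.trans hq'.symm)
    refine ⟨Subtype.val '' A0, Subtype.val '' A0ᶜ, ?_, ?_, ⟨⟨u, hu⟩, huA, rfl⟩,
      ⟨⟨w, hw⟩, hwA, rfl⟩, ?_, ?_⟩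
    · rw [← Set.image_union, Set.union_compl_self]
      exact Subtype.coe_image_univ X
    · exact Set.disjoint_image_of_injective Subtype.coe_injective disjoint_compl_right
    · have htree : (K.induce (Subtype.val '' A0)).IsTree :=
        IsTree.of_iso (doubleInduceIso K X A0) hA1
      have heq : K.induce (Subtype.val '' A0) = G.induce (Subtype.val '' A0) := by
        apply induce_deleteEdges_eq
        rintro ⟨-, hwin⟩
        obtain ⟨z, hz, hzval⟩ := hwin
        have hzz : z = (⟨w, hw⟩ : ↥X) := Subtype.ext hzval
        subst hzz
        exact hwA hz
      rwa [heq] at htree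
    · have htree : (K.induce (Subtype.val '' A0ᶜ)).IsTree :=
        IsTree.of_iso (doubleInduceIso K X A0ᶜ) hA2
      have heq : K.induce (Subtype.val '' A0ᶜ) = G.induce (Subtype.val '' A0ᶜ) := by
        apply induce_deleteEdges_eq
        rintro ⟨huin, -⟩
        obtain ⟨z, hz, hzval⟩ := huin
        have hzz : z = (⟨u, hu⟩ : ↥X) := Subtype.ext hzval
        subst hzz
        exact hz huA
      rwa [heq] at htree

end S

end SubdivideIso

section Main
variable {V : Type}
lemma part1_fwd [Fintype V] (G : SimpleGraph V) (u w : V) (hadj : G.Adj u w) :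
    treeCoverNumber (subdivide G u w) ≤ treeCoverNumber G := by
  classical
  apply tcn_le
  intro C hC
  obtain ⟨htrees, hcov, hdisj⟩ := hC
  set f : Set V → Set (Option V) :=
    fun s => if u ∈ s then insert none (some '' s) else some '' s with hf
  have hfpos : ∀ s : Set V, u ∈ s → f s = insert none (some '' s) := by
    intro s h; simp only [hf, if_pos h]
  have hfneg : ∀ s : Set V, u ∉ s → f s = some '' s := by
    intro s h; simp only [hf, if_neg h]
  have hnone_mem : ∀ s : Set V, none ∈ f s ↔ u ∈ s := by
    intro s
    by_cases h : u ∈ s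
    · rw [hfpos s h]; simpa using h
    · rw [hfneg s h]; simp [h]
  have hsome_mem : ∀ (s : Set V) (x : V), some x ∈ f s ↔ x ∈ s := by
    intro s x
    by_cases h : u ∈ s
    · rw [hfpos s h]; simp
    · rw [hfneg s h]; simp
  refine ⟨C.image f, ⟨?_, ?_, ?_⟩, Finset.card_image_le⟩
  · intro t ht
    rw [Finset.mem_image] at ht
    obtain ⟨s, hsC, rfl⟩ := ht
    by_cases hus : u ∈ s
    · by_cases hws : w ∈ s
      · rw [hfpos s hus]
        exact (subdivide_induce_isTree_iff hadj hus hws).1 (htrees s hsC)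
      · have h1 : ((G.deleteEdges {s(u, w)}).induce s).IsTree := by
          rw [induce_deleteEdges_eq (fun hc => hws hc.2)]
          exact htrees s hsC
        have h2 : ((subdivide G u w).induce (some '' s)).IsTree :=
          IsTree.of_iso (E0 G u w s) h1
        have huniq : ∀ y ∈ some '' s, (subdivide G u w).Adj none y → y = some u := by
          rintro y ⟨a, ha, rfl⟩ hady
          rw [adj_subdivide_none] at hady
          rcases hady with h | h
          · exact h
          · exfalso
            apply hws
            have : a = w := by injection h
            exact this ▸ ha
        have h3 := (isTree_induce_insert_pendant (G := subdivide G u w) (s := some '' s)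
          (v := none) (x := some u) (by simp) ⟨u, hus, rfl⟩ (Or.inl rfl) huniq).1 h2
        rw [hfpos s hus]
        exact h3
    · have h1 : ((G.deleteEdges {s(u, w)}).induce s).IsTree := by
        rw [induce_deleteEdges_eq (fun hc => hus hc.1)]
        exact htrees s hsC
      rw [hfneg s hus]
      exact IsTree.of_iso (E0 G u w s) h1
  · rintro (_ | x)
    · obtain ⟨s, hsC, hus⟩ := hcov u
      exact ⟨f s, Finset.mem_image_of_mem f hsC, (hnone_mem s).2 hus⟩
    · obtain ⟨s, hsC, hxs⟩ := hcov x
      exact ⟨f s, Finset.mem_image_of_mem f hsC, (hsome_mem s x).2 hxs⟩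
  · intro t1 h1 t2 h2 hne
    rw [Finset.mem_coe, Finset.mem_image] at h1 h2
    obtain ⟨s1, hs1C, rfl⟩ := h1
    obtain ⟨s2, hs2C, rfl⟩ := h2
    have hs12 : s1 ≠ s2 := fun h => hne (by rw [h])
    have hd := hdisj (Finset.mem_coe.2 hs1C) (Finset.mem_coe.2 hs2C) hs12
    rw [Function.onFun, Set.disjoint_left] at hd ⊢
    rintro (_ | x) hz1 hz2
    · exact hd ((hnone_mem s1).1 hz1) ((hnone_mem s2).1 hz2)
    · exact hd ((hsome_mem s1 x).1 hz1) ((hsome_mem s2 x).1 hz2)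

lemma part1_bwd [Fintype V] (G : SimpleGraph V) (u w : V) (hadj : G.Adj u w) :
    treeCoverNumber G ≤ treeCoverNumber (subdivide G u w) := by
  classical
  apply tcn_le
  intro C hC
  obtain ⟨htrees, hcov, hdisj⟩ := hC
  set σ : Set (Option V) → Set V := fun t => {x | some x ∈ t} with hσ
  obtain ⟨t0, ht0C, hnt0⟩ := hcov none
  have hmem_unique : ∀ {z : Option V} {t1 t2 : Set (Option V)}, t1 ∈ C → t2 ∈ C →
      z ∈ t1 → z ∈ t2 → t1 = t2 := by
    intro z t1 t2 h1 h2 hz1 hz2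
    by_contra hne
    exact Set.disjoint_left.1 (hdisj (Finset.mem_coe.2 h1) (Finset.mem_coe.2 h2) hne) hz1 hz2
  have hno_none : ∀ t ∈ C, t ≠ t0 → none ∉ t :=
    fun t ht hne hnn => hne (hmem_unique ht ht0C hnn hnt0)
  have hsome_img : ∀ t : Set (Option V), none ∉ t → some '' σ t = t := by
    intro t hn
    ext z
    cases z with
    | none => simp only [hσ]; exact ⟨by rintro ⟨a, -, h⟩; exact absurd h (by simp),
        fun h => absurd h hn⟩
    | some a =>
      constructor
      · rintro ⟨b, hb, hba⟩
        have : b = a := by injection hba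
        exact this ▸ hb
      · intro h
        exact ⟨a, h, rfl⟩
  have tree_convert : ∀ t, t ∈ C → none ∉ t → ¬(u ∈ σ t ∧ w ∈ σ t) →
      (G.induce (σ t)).IsTree := by
    intro t ht hn hnot
    have h2 : ((subdivide G u w).induce (some '' σ t)).IsTree := by
      rw [hsome_img t hn]
      exact htrees t ht
    have h1 := IsTree.of_iso (E0 G u w (σ t)).symm h2
    rwa [induce_deleteEdges_eq hnot] at h1
  have σ_disj : ∀ t1 ∈ C, ∀ t2 ∈ C, t1 ≠ t2 → Disjoint (σ t1) (σ t2) := by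
    intro t1 h1 t2 h2 hne
    rw [Set.disjoint_left]
    intro x hx1 hx2
    exact Set.disjoint_left.1 (hdisj (Finset.mem_coe.2 h1) (Finset.mem_coe.2 h2) hne) hx1 hx2
  have img_disj : ∀ (D : Finset (Set (Option V))), (∀ t ∈ D, t ∈ C) →
      ((D.image σ : Finset (Set V)) : Set (Set V)).PairwiseDisjoint id := by
    intro D hD z1 h1 z2 h2 hne
    rw [Finset.coe_image, Set.mem_image] at h1 h2
    obtain ⟨t1, ht1, rfl⟩ := h1
    obtain ⟨t2, ht2, rfl⟩ := h2
    have ht12 : t1 ≠ t2 := fun h => hne (by rw [h])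
    exact σ_disj t1 (hD t1 (Finset.mem_coe.1 ht1)) t2 (hD t2 (Finset.mem_coe.1 ht2)) ht12
  by_cases hu0 : some u ∈ t0
  · have huσ : u ∈ σ t0 := hu0
    have ht0eq : t0 = insert none (some '' σ t0) := by
      ext z
      cases z with
      | none => simp [hnt0]
      | some a =>
        simp only [Set.mem_insert_iff, reduceCtorEq, false_or]
        constructor
        · intro h; exact ⟨a, h, rfl⟩
        · rintro ⟨b, hb, hba⟩
          have : b = a := by injection hba
          exact this ▸ hb
    have htree0 : ∀ hG0 : ((subdivide G u w).induce (some '' σ t0)).IsTree,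
        ¬(u ∈ σ t0 ∧ w ∈ σ t0) → (G.induce (σ t0)).IsTree := by
      intro hG0 hnot
      have h1 := IsTree.of_iso (E0 G u w (σ t0)).symm hG0
      rwa [induce_deleteEdges_eq hnot] at h1
    have main : ∀ t ∈ C, (G.induce (σ t)).IsTree := by
      intro t ht
      by_cases hteq : t = t0
      · subst hteq
        by_cases hw0 : some w ∈ t
        · refine (subdivide_induce_isTree_iff hadj huσ hw0).2 ?_
          rw [← ht0eq]
          exact htrees t ht
        · -- pendant removal at none
          have h2 : ((subdivide G u w).induce (insert none (some '' σ t))).IsTree := by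
            rw [← ht0eq]
            exact htrees t ht
          have huniq : ∀ y ∈ some '' σ t, (subdivide G u w).Adj none y → y = some u := by
            rintro y ⟨a, ha, rfl⟩ hady
            rw [adj_subdivide_none] at hady
            rcases hady with h | h
            · exact h
            · exfalso
              apply hw0
              have : a = w := by injection h
              exact this ▸ ha
          have h3 := (isTree_induce_insert_pendant (G := subdivide G u w) (s := some '' σ t)
            (v := none) (x := some u) (by simp) ⟨u, huσ, rfl⟩ (Or.inl rfl) huniq).2 h2
          exact htree0 h3 (fun hc => hw0 hc.2)
      · refine tree_convert t ht (hno_none t ht hteq) ?_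
        rintro ⟨hu', -⟩
        exact hteq (hmem_unique ht ht0C hu' hu0)
    refine ⟨C.image σ, ⟨?_, ?_, ?_⟩, Finset.card_image_le⟩
    · intro t' ht'
      rw [Finset.mem_image] at ht'
      obtain ⟨t, ht, rfl⟩ := ht'
      exact main t ht
    · intro x
      obtain ⟨t, ht, hx⟩ := hcov (some x)
      exact ⟨σ t, Finset.mem_image_of_mem σ ht, hx⟩
    · exact img_disj C (fun t ht => ht)
  · -- some u ∉ t0
    by_cases hw0 : some w ∈ t0
    · -- mirrored pendant case
      have hwσ : w ∈ σ t0 := hw0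
      have ht0eq : t0 = insert none (some '' σ t0) := by
        ext z
        cases z with
        | none => simp [hnt0]
        | some a =>
          simp only [Set.mem_insert_iff, reduceCtorEq, false_or]
          constructor
          · intro h; exact ⟨a, h, rfl⟩
          · rintro ⟨b, hb, hba⟩
            have : b = a := by injection hba
            exact this ▸ hb
      have main : ∀ t ∈ C, (G.induce (σ t)).IsTree := by
        intro t ht
        by_cases hteq : t = t0
        · subst hteq
          have h2 : ((subdivide G u w).induce (insert none (some '' σ t))).IsTree := by
            rw [← ht0eq]
            exact htrees t ht
          have huniq : ∀ y ∈ some '' σ t, (subdivide G u w).Adj none y → y = some w := by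
            rintro y ⟨a, ha, rfl⟩ hady
            rw [adj_subdivide_none] at hady
            rcases hady with h | h
            · exfalso
              apply hu0
              have : a = u := by injection h
              exact this ▸ ha
            · exact h
          have h3 := (isTree_induce_insert_pendant (G := subdivide G u w) (s := some '' σ t)
            (v := none) (x := some w) (by simp) ⟨w, hwσ, rfl⟩ (Or.inr rfl) huniq).2 h2
          have h1 := IsTree.of_iso (E0 G u w (σ t)).symm h3
          rwa [induce_deleteEdges_eq (u := u) (w := w) (X := σ t)
            (fun hc => hu0 (hc.1 : some u ∈ t))] at h1
        · refine tree_convert t ht (hno_none t ht hteq) ?_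
          rintro ⟨-, hw'⟩
          exact hteq (hmem_unique ht ht0C hw' hw0)
      refine ⟨C.image σ, ⟨?_, ?_, ?_⟩, Finset.card_image_le⟩
      · intro t' ht'
        rw [Finset.mem_image] at ht'
        obtain ⟨t, ht, rfl⟩ := ht'
        exact main t ht
      · intro x
        obtain ⟨t, ht, hx⟩ := hcov (some x)
        exact ⟨σ t, Finset.mem_image_of_mem σ ht, hx⟩
      · exact img_disj C (fun t ht => ht)
    · -- t0 = {none}
      have ht0single : t0 = {none} := by
        ext z
        simp only [Set.mem_singleton_iff]
        constructor
        · intro hz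
          by_contra hzne
          cases z with
          | none => exact hzne rfl
          | some a =>
            obtain ⟨p⟩ := (htrees t0 ht0C).isConnected.preconnected ⟨none, hnt0⟩ ⟨some a, hz⟩
            cases p with
            | cons h1 q =>
              rename_i y
              have : (subdivide G u w).Adj none ↑y := h1
              rw [adj_subdivide_none] at this
              rcases this with h | h
              · exact hu0 (h ▸ y.2)
              · exact hw0 (h ▸ y.2)
        · rintro rfl; exact hnt0
      obtain ⟨su, hsuC, husu⟩ := hcov (some u)
      have hsu_ne : su ≠ t0 := by
        intro h
        rw [h, ht0single] at husu
        simpa using husu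
      by_cases hwsu : some w ∈ su
      · -- split case
        have hKtree : ((G.deleteEdges {s(u, w)}).induce (σ su)).IsTree := by
          refine IsTree.of_iso (E0 G u w (σ su)).symm ?_
          rw [hsome_img su (hno_none su hsuC hsu_ne)]
          exact htrees su hsuC
        have husu' : u ∈ σ su := husu
        have hwsu' : w ∈ σ su := hwsu
        obtain ⟨A, B, hAB, hABd, huA, hwB, hAt, hBt⟩ :=
          split_app (G := G) (u := u) (w := w) (X := σ su) husu' hwsu' hadj hKtree
        have hAsub : A ⊆ σ su := hAB ▸ Set.subset_union_left
        have hBsub : B ⊆ σ su := hAB ▸ Set.subset_union_right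
        set D : Finset (Set (Option V)) := (C.erase t0).erase su with hD
        have hDC : ∀ t ∈ D, t ∈ C := fun t ht =>
          Finset.mem_of_mem_erase (Finset.mem_of_mem_erase ht)
        have hDnet0 : ∀ t ∈ D, t ≠ t0 := fun t ht =>
          (Finset.mem_erase.1 (Finset.mem_of_mem_erase ht)).1
        have hDnesu : ∀ t ∈ D, t ≠ su := fun t ht => (Finset.mem_erase.1 ht).1
        refine ⟨D.image σ ∪ {A, B}, ⟨?_, ?_, ?_⟩, ?_⟩
        · intro t' ht'
          rw [Finset.mem_union, Finset.mem_image] at ht'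
          rcases ht' with ⟨t, ht, rfl⟩ | ht'
          · refine tree_convert t (hDC t ht) (hno_none t (hDC t ht) (hDnet0 t ht)) ?_
            rintro ⟨hu', -⟩
            exact hDnesu t ht (hmem_unique (hDC t ht) hsuC hu' husu)
          · rcases Finset.mem_insert.1 ht' with rfl | ht'
            · exact hAt
            · rw [Finset.mem_singleton.1 ht']
              exact hBt
        · intro x
          obtain ⟨t, ht, hx⟩ := hcov (some x)
          have htne : t ≠ t0 := by
            intro h
            rw [h, ht0single] at hx
            simpa using hx
          by_cases htsu : t = su
          · subst htsu
            have : x ∈ A ∪ B := hAB ▸ (hx : x ∈ σ t)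
            rcases this with hx' | hx'
            · exact ⟨A, Finset.mem_union_right _ (Finset.mem_insert_self _ _), hx'⟩
            · exact ⟨B, Finset.mem_union_right _
                (Finset.mem_insert_of_mem (Finset.mem_singleton_self _)), hx'⟩
          · refine ⟨σ t, Finset.mem_union_left _ (Finset.mem_image_of_mem σ ?_), hx⟩
            exact Finset.mem_erase.2 ⟨htsu, Finset.mem_erase.2 ⟨htne, ht⟩⟩
        · -- pairwise disjoint
          intro z1 h1 z2 h2 hne
          have hmem : ∀ z, z ∈ ((D.image σ ∪ {A, B} : Finset (Set V)) : Set (Set V)) →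
              (∃ t ∈ D, σ t = z) ∨ z = A ∨ z = B := by
            intro z hz
            rw [Finset.mem_coe, Finset.mem_union] at hz
            rcases hz with hz | hz
            · rw [Finset.mem_image] at hz
              obtain ⟨t, ht, rfl⟩ := hz
              exact Or.inl ⟨t, ht, rfl⟩
            · rcases Finset.mem_insert.1 hz with rfl | hz
              · exact Or.inr (Or.inl rfl)
              · exact Or.inr (Or.inr (Finset.mem_singleton.1 hz))
          have hdisj_img_su : ∀ t ∈ D, Disjoint (σ t) (σ su) := fun t ht =>
            σ_disj t (hDC t ht) su hsuC (hDnesu t ht)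
          rcases hmem z1 h1 with ⟨t1, ht1, rfl⟩ | hz1 <;>
            rcases hmem z2 h2 with ⟨t2, ht2, rfl⟩ | hz2
          · have ht12 : t1 ≠ t2 := fun h => hne (by rw [h])
            exact σ_disj t1 (hDC t1 ht1) t2 (hDC t2 ht2) ht12
          · rcases hz2 with rfl | rfl
            · exact (hdisj_img_su t1 ht1).mono_right hAsub
            · exact (hdisj_img_su t1 ht1).mono_right hBsub
          · rcases hz1 with rfl | rfl
            · exact ((hdisj_img_su t2 ht2).mono_right hAsub).symm
            · exact ((hdisj_img_su t2 ht2).mono_right hBsub).symm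
          · rcases hz1 with rfl | rfl <;> rcases hz2 with rfl | rfl
            · exact absurd rfl hne
            · exact hABd
            · exact hABd.symm
            · exact absurd rfl hne
        · -- cardinality
          have hsuD : su ∈ C.erase t0 := Finset.mem_erase.2 ⟨hsu_ne, hsuC⟩
          have hcard2 : 2 ≤ C.card := by
            have : ({t0, su} : Finset (Set (Option V))) ⊆ C := by
              intro z hz
              rcases Finset.mem_insert.1 hz with rfl | hz
              · exact ht0C
              · rw [Finset.mem_singleton.1 hz]
                exact hsuC
            have h2 : ({t0, su} : Finset (Set (Option V))).card = 2 := by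
              rw [Finset.card_insert_of_notMem (by simpa using hsu_ne.symm)]
              simp
            calc 2 = ({t0, su} : Finset (Set (Option V))).card := h2.symm
              _ ≤ C.card := Finset.card_le_card this
          calc (D.image σ ∪ {A, B}).card
              ≤ (D.image σ).card + ({A, B} : Finset (Set V)).card := Finset.card_union_le _ _
            _ ≤ D.card + 2 := by
                have h1 : (D.image σ).card ≤ D.card := Finset.card_image_le
                have h2 : ({A, B} : Finset (Set V)).card ≤ 2 := by
                  apply le_trans (Finset.card_insert_le _ _)
                  simp
                omega
            _ = (C.card - 1 - 1) + 2 := by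
                rw [hD, Finset.card_erase_of_mem hsuD, Finset.card_erase_of_mem ht0C]
            _ ≤ C.card := by omega
      · -- some w not in su : just drop t0
        refine ⟨(C.erase t0).image σ, ⟨?_, ?_, ?_⟩, ?_⟩
        · intro t' ht'
          rw [Finset.mem_image] at ht'
          obtain ⟨t, ht, rfl⟩ := ht'
          have htC : t ∈ C := Finset.mem_of_mem_erase ht
          have htne : t ≠ t0 := (Finset.mem_erase.1 ht).1
          refine tree_convert t htC (hno_none t htC htne) ?_
          rintro ⟨hu', hw'⟩
          have : t = su := hmem_unique htC hsuC hu' husu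
          subst this
          exact hwsu hw'
        · intro x
          obtain ⟨t, ht, hx⟩ := hcov (some x)
          have htne : t ≠ t0 := by
            intro h
            rw [h, ht0single] at hx
            simpa using hx
          exact ⟨σ t, Finset.mem_image_of_mem σ (Finset.mem_erase.2 ⟨htne, ht⟩), hx⟩
        · exact img_disj (C.erase t0) (fun t ht => Finset.mem_of_mem_erase ht)
        · calc ((C.erase t0).image σ).card ≤ (C.erase t0).card := Finset.card_image_le
            _ ≤ C.card := Finset.card_le_card (Finset.erase_subset _ _)


section Part2

variable [Fintype V] [DecidableEq V] (G : SimpleGraph V) [DecidableRel G.Adj] (v : V)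

lemma part2 (hdeg : G.degree v = 1) :
    treeCoverNumber (G.induce ({v}ᶜ : Set V)) = treeCoverNumber G := by
  classical
  obtain ⟨x, hx⟩ := Finset.card_eq_one.1 (by rwa [← G.card_neighborFinset_eq_degree] at hdeg)
  have hadjx : G.Adj v x := by
    rw [← mem_neighborFinset, hx]
    exact Finset.mem_singleton_self x
  have huniq : ∀ y : V, G.Adj v y → y = x := by
    intro y hy
    have := (mem_neighborFinset G v y).2 hy
    rw [hx, Finset.mem_singleton] at this
    exact this
  have hxv : x ≠ v := hadjx.ne'
  haveI : Fintype ↥({v}ᶜ : Set V) := Fintype.ofFinite _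
  -- the tree-transfer fact for sets avoiding v
  have tree_fact : ∀ s : Set V, v ∉ s → (G.induce s).IsTree →
      ((G.induce ({v}ᶜ : Set V)).induce {y : ↥({v}ᶜ : Set V) | ↑y ∈ s}).IsTree := by
    intro s hvs hs
    refine IsTree.of_iso (doubleInduceIso G ({v}ᶜ : Set V) {y | ↑y ∈ s}).symm ?_
    have himg : Subtype.val '' {y : ↥({v}ᶜ : Set V) | ↑y ∈ s} = s := by
      ext z
      constructor
      · rintro ⟨y, hy, rfl⟩
        exact hy
      · intro hz
        exact ⟨⟨z, fun h => hvs (h ▸ hz)⟩, hz, rfl⟩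
    rw [himg]
    exact hs
  apply le_antisymm
  · -- cover of G gives cover of G - v
    apply tcn_le
    intro C hC
    obtain ⟨htrees, hcov, hdisj⟩ := hC
    set τ : Set V → Set ↥({v}ᶜ : Set V) := fun s => {y | ↑y ∈ s} with hτ
    obtain ⟨s0, hs0C, hvs0⟩ := hcov v
    have τ_disj : ∀ (D : Finset (Set V)), (∀ t ∈ D, t ∈ C) →
        ((D.image τ : Finset (Set ↥({v}ᶜ : Set V))) : Set (Set ↥({v}ᶜ : Set V))).PairwiseDisjoint
          id := by
      intro D hD z1 h1 z2 h2 hne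
      rw [Finset.coe_image, Set.mem_image] at h1 h2
      obtain ⟨t1, ht1, rfl⟩ := h1
      obtain ⟨t2, ht2, rfl⟩ := h2
      have ht12 : t1 ≠ t2 := fun h => hne (by rw [h])
      have hd := hdisj (Finset.mem_coe.2 (hD t1 ht1)) (Finset.mem_coe.2 (hD t2 ht2)) ht12
      rw [Function.onFun, Set.disjoint_left] at hd ⊢
      intro z hz1 hz2
      exact hd hz1 hz2
    by_cases hs0 : s0 = {v}
    · -- drop s0
      refine ⟨(C.erase s0).image τ, ⟨?_, ?_, ?_⟩, le_trans Finset.card_image_le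
        (Finset.card_le_card (Finset.erase_subset _ _))⟩
      · intro t' ht'
        rw [Finset.mem_image] at ht'
        obtain ⟨t, ht, rfl⟩ := ht'
        have htC : t ∈ C := Finset.mem_of_mem_erase ht
        have hvt : v ∉ t := by
          intro hvt
          apply (Finset.mem_erase.1 ht).1
          by_contra hne
          exact Set.disjoint_left.1 (hdisj (Finset.mem_coe.2 htC) (Finset.mem_coe.2 hs0C) hne)
            hvt hvs0
        exact tree_fact t hvt (htrees t htC)
      · rintro ⟨y, hy⟩
        obtain ⟨t, htC, hyt⟩ := hcov y
        have htne : t ≠ s0 := by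
          rintro rfl
          rw [hs0] at hyt
          exact hy hyt
        exact ⟨τ t, Finset.mem_image_of_mem τ (Finset.mem_erase.2 ⟨htne, htC⟩), hyt⟩
      · exact τ_disj (C.erase s0) (fun t ht => Finset.mem_of_mem_erase ht)
    · -- v is a pendant leaf of s0
      have hxs0 : x ∈ s0 := by
        obtain ⟨z, hzs0, hzv⟩ : ∃ z ∈ s0, z ≠ v := by
          by_contra hcon
          push_neg at hcon
          exact hs0 (Set.eq_singleton_iff_unique_mem.2 ⟨hvs0, hcon⟩)
        obtain ⟨p⟩ := (htrees s0 hs0C).isConnected.preconnected ⟨v, hvs0⟩ ⟨z, hzs0⟩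
        cases p with
        | nil => exact absurd rfl hzv
        | cons h1 q =>
          rename_i y
          have : G.Adj v ↑y := h1
          have := huniq _ this
          exact this ▸ y.2
      have hs0tree : (G.induce (s0 \ {v})).IsTree := by
        have hveq : insert v (s0 \ {v}) = s0 := by
          rw [Set.insert_diff_singleton]
          exact Set.insert_eq_self.2 hvs0
        refine (isTree_induce_insert_pendant (v := v) (x := x) (by simp) ?_ hadjx ?_).2 ?_
        · exact ⟨hxs0, hxv⟩
        · intro y hy hadjy
          exact huniq y hadjy
        · rw [hveq]
          exact htrees s0 hs0C
      have hτeq : τ s0 = τ (s0 \ {v}) := by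
        ext ⟨y, hy⟩
        simp only [hτ, Set.mem_setOf_eq, Set.mem_diff, Set.mem_singleton_iff]
        exact ⟨fun h => ⟨h, fun h' => hy (h' ▸ rfl)⟩, fun h => h.1⟩
      refine ⟨C.image τ, ⟨?_, ?_, ?_⟩, Finset.card_image_le⟩
      · intro t' ht'
        rw [Finset.mem_image] at ht'
        obtain ⟨t, ht, rfl⟩ := ht'
        by_cases hteq : t = s0
        · subst hteq
          rw [hτeq]
          exact tree_fact _ (by simp) hs0tree
        · have hvt : v ∉ t := by
            intro hvt
            exact hteq (by
              by_contra hne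
              exact Set.disjoint_left.1 (hdisj (Finset.mem_coe.2 ht) (Finset.mem_coe.2 hs0C) hne)
                hvt hvs0)
          exact tree_fact t hvt (htrees t ht)
      · rintro ⟨y, hy⟩
        obtain ⟨t, htC, hyt⟩ := hcov y
        exact ⟨τ t, Finset.mem_image_of_mem τ htC, hyt⟩
      · exact τ_disj C (fun t ht => ht)
  · -- cover of G - v gives cover of G
    apply tcn_le
    intro C hC
    obtain ⟨htrees, hcov, hdisj⟩ := hC
    have hxc : x ∈ ({v}ᶜ : Set V) := hxv
    obtain ⟨sx, hsxC, hxsx⟩ := hcov ⟨x, hxc⟩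
    set υ : Set ↥({v}ᶜ : Set V) → Set V :=
      fun s => if (⟨x, hxc⟩ : ↥({v}ᶜ : Set V)) ∈ s then insert v (Subtype.val '' s)
        else Subtype.val '' s with hυ
    have hvmem : ∀ s, v ∈ υ s ↔ (⟨x, hxc⟩ : ↥({v}ᶜ : Set V)) ∈ s := by
      intro s
      by_cases h : (⟨x, hxc⟩ : ↥({v}ᶜ : Set V)) ∈ s
      · simp only [hυ, if_pos h]
        refine ⟨fun _ => h, fun _ => Set.mem_insert _ _⟩
      · simp only [hυ, if_neg h]
        constructor
        · rintro ⟨z, hz, hzv⟩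
          exact absurd hzv z.2
        · intro h'
          exact absurd h' h
    have hymem : ∀ (s) (y : ↥({v}ᶜ : Set V)), ↑y ∈ υ s ↔ y ∈ s := by
      intro s y
      have hyv : (y : V) ≠ v := y.2
      have himg : (y : V) ∈ Subtype.val '' s ↔ y ∈ s := by
        constructor
        · rintro ⟨z, hz, hzy⟩
          rwa [Subtype.ext hzy] at hz
        · intro h
          exact ⟨y, h, rfl⟩
      by_cases h : (⟨x, hxc⟩ : ↥({v}ᶜ : Set V)) ∈ s
      · simp only [hυ, if_pos h, Set.mem_insert_iff]
        rw [himg]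
        exact ⟨fun hh => hh.resolve_left hyv, fun hh => Or.inr hh⟩
      · simp only [hυ, if_neg h]
        exact himg
    haveI : Fintype ↥({v}ᶜ : Set V) := Fintype.ofFinite _
    refine ⟨C.image υ, ⟨?_, ?_, ?_⟩, Finset.card_image_le⟩
    · intro t' ht'
      rw [Finset.mem_image] at ht'
      obtain ⟨s, hsC, rfl⟩ := ht'
      have base : (G.induce (Subtype.val '' s)).IsTree :=
        IsTree.of_iso (doubleInduceIso G ({v}ᶜ : Set V) s) (htrees s hsC)
      by_cases h : (⟨x, hxc⟩ : ↥({v}ᶜ : Set V)) ∈ s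
      · have hres := (isTree_induce_insert_pendant (G := G) (s := Subtype.val '' s)
          (v := v) (x := x)
          (fun hcon => by obtain ⟨z, -, hzv⟩ := hcon; exact z.2 hzv)
          ⟨⟨x, hxc⟩, h, rfl⟩ hadjx
          (fun y _ hadjy => huniq y hadjy)).1 base
        rw [show υ s = insert v (Subtype.val '' s) from by simp only [hυ, if_pos h]]
        exact hres
      · rw [show υ s = Subtype.val '' s from by simp only [hυ, if_neg h]]
        exact base
    · intro z
      by_cases hz : z = v
      · subst hz
        exact ⟨υ sx, Finset.mem_image_of_mem υ hsxC, (hvmem sx).2 hxsx⟩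
      · obtain ⟨s, hsC, hzs⟩ := hcov ⟨z, hz⟩
        exact ⟨υ s, Finset.mem_image_of_mem υ hsC, (hymem s ⟨z, hz⟩).2 hzs⟩
    · intro z1 h1 z2 h2 hne
      rw [Finset.mem_coe, Finset.mem_image] at h1 h2
      obtain ⟨s1, hs1C, rfl⟩ := h1
      obtain ⟨s2, hs2C, rfl⟩ := h2
      have hs12 : s1 ≠ s2 := fun h => hne (by rw [h])
      have hd := hdisj (Finset.mem_coe.2 hs1C) (Finset.mem_coe.2 hs2C) hs12
      rw [Function.onFun, Set.disjoint_left] at hd ⊢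
      intro z hz1 hz2
      by_cases hzv : z = v
      · subst hzv
        exact hd ((hvmem s1).1 hz1) ((hvmem s2).1 hz2)
      · exact hd ((hymem s1 ⟨z, hzv⟩).1 hz1) ((hymem s2 ⟨z, hzv⟩).1 hz2)

end Part2

end Main
end TCN

theorem stmt_19 :
    (∀ (V : Type) [Fintype V] (G : SimpleGraph V) (u w : V), G.Adj u w →
      treeCoverNumber (subdivide G u w) = treeCoverNumber G) ∧
    (∀ (V : Type) [Fintype V] [DecidableEq V] (G : SimpleGraph V) [inst : DecidableRel G.Adj]
      (v : V), G.degree v = 1 →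
      treeCoverNumber (G.induce ({v}ᶜ : Set V)) = treeCoverNumber G) := by
  constructor
  · intro V _ G u w hadj
    exact le_antisymm (TCN.part1_fwd G u w hadj) (TCN.part1_bwd G u w hadj)
  · intro V _ _ G _ v hdeg
    exact TCN.part2 G v hdeg
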